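/- If the auction system is β-KL-expressive and c-homogeneous, and there is only one slot to display ads (w_1 > 0 and w_k = 0 for all k ≥ 2), then in the full-information setting, for every conservative pure Nash equilibrium b of the PBM-GSP mechanism, SW(OPT(v)) ≤ (c/β) · SW(b); that is, the single-slot pure price of anarchy of PBM-GSP is at most c/β. -/
import Mathlib


open Finset MeasureTheory

noncomputable section

namespace PBM

attribute [local instance] Classical.propDecidable

/-- 0-indexed rank of advertiser `i` among the advertisers with a positive bid
(higher bid first, ties broken by smaller index). -/
def rank {n : ℕ} (bs : Fin n → ℝ) (i : Fin n) : ℕ :=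
  (Finset.univ.filter fun j => 0 < bs j ∧ (bs i < bs j ∨ (bs j = bs i ∧ j < i))).card

/-- 0-indexed rank of `i` among all coordinates of `x` (decreasing, ties by index). -/
def rankAll {n : ℕ} (x : Fin n → ℝ) (i : Fin n) : ℕ :=
  (Finset.univ.filter fun j => x i < x j ∨ (x j = x i ∧ j < i)).card

/-- click probability of the slot obtained by `i` (0 if `i` places no positive bid). -/
def slotW {n : ℕ} (w : ℕ → ℝ) (bs : Fin n → ℝ) (i : Fin n) : ℝ :=
  if 0 < bs i then w (rank bs i) else 0

/-- GSP per-click payment of `i`: the bid of the advertiser ranked right below `i`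
(0 if there is none). -/
def pay {n : ℕ} (bs : Fin n → ℝ) (i : Fin n) : ℝ :=
  ∑ j ∈ Finset.univ.filter (fun j => 0 < bs j ∧ rank bs j = rank bs i + 1), bs j

/-- utility of bidder `i` in the single-keyword GSP game with values `vv`. -/
def gspUtil {n : ℕ} (w : ℕ → ℝ) (vv : Fin n → ℝ) (bs : Fin n → ℝ) (i : Fin n) : ℝ :=
  slotW w bs i * (vv i - pay bs i)

variable {Q S : Type*} [Fintype Q] [Fintype S]

/-- expected value of keyword `s` for an advertiser with per-query valuations `vq`. -/
def kwVal (P : Q → ℝ) (pi : Q → S → ℝ) (vq : Q → ℝ) (s : S) : ℝ :=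
  (∑ q, pi q s * vq q * P q) / (∑ q, pi q s * P q)

/-- probability mass of keyword `s`. -/
def mass (P : Q → ℝ) (pi : Q → S → ℝ) (s : S) : ℝ := ∑ q, pi q s * P q

/-- expected utility of advertiser `i` in PBM-GSP. -/
def util {n : ℕ} (P : Q → ℝ) (pi : Q → S → ℝ) (w : ℕ → ℝ)
    (v : Fin n → Q → ℝ) (b : Fin n → S → ℝ) (i : Fin n) : ℝ :=
  ∑ q, P q * ∑ s, pi q s *
    (slotW w (fun j => b j s) i * (v i q - pay (fun j => b j s) i))

/-- social welfare of bid profile `b` in PBM-GSP. -/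
def SW {n : ℕ} (P : Q → ℝ) (pi : Q → S → ℝ) (w : ℕ → ℝ)
    (v : Fin n → Q → ℝ) (b : Fin n → S → ℝ) : ℝ :=
  ∑ q, P q * ∑ s, pi q s * ∑ i, slotW w (fun j => b j s) i * v i q

/-- optimal social welfare. -/
def SWopt {n : ℕ} (P : Q → ℝ) (w : ℕ → ℝ) (v : Fin n → Q → ℝ) : ℝ :=
  ∑ q, P q * ∑ i, w (rankAll (fun j => v j q) i) * v i q

/-- welfare of the truthful keyword-bid profile `𝔳` (each advertiser bids his
expected keyword value on every keyword, no `κ` constraint). -/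
def SWtruth {n : ℕ} (P : Q → ℝ) (pi : Q → S → ℝ) (w : ℕ → ℝ)
    (v : Fin n → Q → ℝ) : ℝ :=
  ∑ q, P q * ∑ s, pi q s *
    ∑ i, w (rankAll (fun j => kwVal P pi (v j) s) i) * kwVal P pi (v i) s

/-- a bid vector is valid if it is nonnegative and positive on at most `κ` keywords. -/
def ValidBid (κ : ℕ) (bi : S → ℝ) : Prop :=
  (∀ s, 0 ≤ bi s) ∧ ((Finset.univ.filter fun s => 0 < bi s).card ≤ κ)

/-- a bid profile is conservative if everybody bids at most his expected keyword value. -/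
def Conservative {n : ℕ} (P : Q → ℝ) (pi : Q → S → ℝ)
    (v : Fin n → Q → ℝ) (b : Fin n → S → ℝ) : Prop :=
  ∀ i s, b i s ≤ kwVal P pi (v i) s

/-- `β`-keyword-level expressiveness for valuation profile `v`. -/
def KLExpressive {n : ℕ} (pi : Q → S → ℝ) (v : Fin n → Q → ℝ) (κ : ℕ) (β : ℝ) : Prop :=
  ∀ i : Fin n,
    β * ((Finset.univ.filter fun s : S => ∃ q, 0 < pi q s ∧ 0 < v i q).card : ℝ) ≤ (κ : ℝ)

/-- expected utility of advertiser `i` in PBM-GSP with reserve price vector `r`. -/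
def utilR {n : ℕ} (P : Q → ℝ) (pi : Q → S → ℝ) (w : ℕ → ℝ) (r : S → ℝ)
    (v : Fin n → Q → ℝ) (b : Fin n → S → ℝ) (i : Fin n) : ℝ :=
  ∑ q, P q * ∑ s, pi q s *
    (if 0 < b i s ∧ r s ≤ b i s then
       w (rank (fun j => b j s) i) * (v i q - max (r s) (pay (fun j => b j s) i))
     else 0)

/-- revenue of PBM-GSP with reserve price vector `r`. -/
def revenue {n : ℕ} (P : Q → ℝ) (pi : Q → S → ℝ) (w : ℕ → ℝ) (r : S → ℝ)
    (b : Fin n → S → ℝ) : ℝ :=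
  ∑ q, P q * ∑ s, pi q s * ∑ i,
    (if 0 < b i s ∧ r s ≤ b i s then
       w (rank (fun j => b j s) i) * max (r s) (pay (fun j => b j s) i)
     else 0)

/-- reserve-restricted social welfare of PBM-GSP with reserve price vector `r`. -/
def SWres {n : ℕ} (P : Q → ℝ) (pi : Q → S → ℝ) (w : ℕ → ℝ) (r : S → ℝ)
    (v : Fin n → Q → ℝ) (b : Fin n → S → ℝ) : ℝ :=
  ∑ q, P q * ∑ s, pi q s * ∑ i,
    (if 0 < b i s ∧ r s ≤ b i s then w (rank (fun j => b j s) i) * v i q else 0)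

/-- marginal CDF on keyword `s` of a distribution `T` of keyword-valuation vectors. -/
def cdfT (T : Measure (S → ℝ)) (s : S) (x : ℝ) : ℝ :=
  ((T.map fun f => f s) (Set.Iic x)).toReal

/-- the virtual value function `φ_s(x) = x - (1 - T_s(x))/t_s(x)`. -/
def virt (T : Measure (S → ℝ)) (td : S → ℝ → ℝ) (s : S) (x : ℝ) : ℝ :=
  x - (1 - cdfT T s x) / td s x

/-- `td s` is the density of the marginal of `T` on keyword `s`. -/
def HasDensity (T : Measure (S → ℝ)) (td : S → ℝ → ℝ) : Prop :=
  ∀ s : S, T.map (fun f => f s)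
    = MeasureTheory.volume.withDensity (fun x => ENNReal.ofReal (td s x))

/-- `r` is the vector of Myerson reserve prices. -/
def MyersonReserve (T : Measure (S → ℝ)) (td : S → ℝ → ℝ) (r : S → ℝ) : Prop :=
  ∀ s : S, 0 ≤ r s ∧ virt T td s (r s) = 0

/-- `T` is an MHR distribution with bounded derivative `η`. -/
def MHRBounded (T : Measure (S → ℝ)) (td : S → ℝ → ℝ) (r : S → ℝ) (η : ℝ) : Prop :=
  ∀ s : S, (∀ x : ℝ, 0 ≤ x → DifferentiableAt ℝ (virt T td s) x) ∧
    (∀ x : ℝ, 0 ≤ x → 1 ≤ deriv (virt T td s) x) ∧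
    (∀ x : ℝ, r s ≤ x → deriv (virt T td s) x ≤ η)

/-- `T` has a monotone hazard rate. -/
def MHRhazard (T : Measure (S → ℝ)) (td : S → ℝ → ℝ) : Prop :=
  ∀ s : S, MonotoneOn (fun x => td s x / (1 - cdfT T s x))
    {x : ℝ | 0 ≤ x ∧ cdfT T s x < 1}

/-- expected revenue (per valuation profile) of PBM-VCG with reserve prices, via
Myerson's lemma: virtual-value surplus of the welfare-maximizing allocation. -/
def revVCG {n : ℕ} (P : Q → ℝ) (pi : Q → S → ℝ) (w : ℕ → ℝ)
    (T : Measure (S → ℝ)) (td : S → ℝ → ℝ) (v : Fin n → Q → ℝ) : ℝ :=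
  ∑ s, mass P pi s * ∑ i, w (rankAll (fun j => kwVal P pi (v j) s) i) *
    (if 0 < virt T td s (kwVal P pi (v i) s) then virt T td s (kwVal P pi (v i) s) else 0)

end PBM

section Aux
attribute [local instance] Classical.propDecidable
open PBM Finset

variable {n : ℕ}

/-- strict priority order: `j` is ranked above `k`. -/
private def rel (bs : Fin n → ℝ) (j k : Fin n) : Prop :=
  bs k < bs j ∨ (bs j = bs k ∧ j < k)

private lemma rel_irrefl (bs : Fin n → ℝ) (j : Fin n) : ¬ rel bs j j := by
  simp [rel]

private lemma rel_total {bs : Fin n → ℝ} {j k : Fin n} (h : j ≠ k) :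
    rel bs j k ∨ rel bs k j := by
  rcases lt_trichotomy (bs j) (bs k) with h1 | h1 | h1
  · exact Or.inr (Or.inl h1)
  · rcases lt_or_gt_of_ne h with h2 | h2
    · exact Or.inl (Or.inr ⟨h1, h2⟩)
    · exact Or.inr (Or.inr ⟨h1.symm, h2⟩)
  · exact Or.inl (Or.inl h1)

private lemma rel_trans {bs : Fin n → ℝ} {x y z : Fin n}
    (h1 : rel bs x y) (h2 : rel bs y z) : rel bs x z := by
  rcases h1 with h1 | ⟨h1, h1'⟩ <;> rcases h2 with h2 | ⟨h2, h2'⟩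
  · exact Or.inl (h2.trans h1)
  · exact Or.inl (h2 ▸ h1)
  · exact Or.inl (h2.trans_le h1.ge)
  · exact Or.inr ⟨h1.trans h2, h1'.trans h2'⟩

private lemma rank_filter (bs : Fin n → ℝ) (i : Fin n) :
    rank bs i = (univ.filter fun j => 0 < bs j ∧ rel bs j i).card := by
  unfold rank
  congr 1
  exact Finset.filter_congr fun x _ => Iff.rfl

private lemma rank_lt {bs : Fin n → ℝ} {j k : Fin n} (hj : 0 < bs j) (h : rel bs j k) :
    rank bs j < rank bs k := by
  rw [rank_filter, rank_filter]
  have hsub : (univ.filter fun x => 0 < bs x ∧ rel bs x j) ⊆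
      univ.filter fun x => 0 < bs x ∧ rel bs x k := by
    intro x hx
    simp only [mem_filter, mem_univ, true_and] at hx ⊢
    exact ⟨hx.1, rel_trans hx.2 h⟩
  refine Finset.card_lt_card ((Finset.ssubset_iff_of_subset hsub).2 ⟨j, ?_, ?_⟩)
  · simp only [mem_filter, mem_univ, true_and]; exact ⟨hj, h⟩
  · simp only [mem_filter, mem_univ, true_and, not_and]
    exact fun _ => rel_irrefl bs j

private lemma rank_injOn {bs : Fin n → ℝ} {j k : Fin n} (hj : 0 < bs j) (hk : 0 < bs k)
    (h : rank bs j = rank bs k) : j = k := by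
  by_contra hne
  rcases rel_total hne with h' | h'
  · exact absurd h (rank_lt hj h').ne
  · exact absurd h.symm (rank_lt hk h').ne

private lemma rank_zero_rel {bs : Fin n → ℝ} {i : Fin n} (h0 : rank bs i = 0)
    {j : Fin n} (hj : 0 < bs j) (hne : j ≠ i) : rel bs i j := by
  have hemp : (univ.filter fun x => 0 < bs x ∧ rel bs x i) = ∅ :=
    Finset.card_eq_zero.1 (by rw [← rank_filter]; exact h0)
  have hnm : j ∉ (univ.filter fun x => 0 < bs x ∧ rel bs x i) := by
    rw [hemp]; exact Finset.notMem_empty j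
  simp only [mem_filter, mem_univ, true_and, not_and] at hnm
  exact (rel_total hne).resolve_left (hnm hj)

private lemma pay_nonneg (bs : Fin n → ℝ) (i : Fin n) : 0 ≤ pay bs i :=
  Finset.sum_nonneg fun j hj => ((Finset.mem_filter.1 hj).2.1).le

private lemma pay_le {bs : Fin n → ℝ} {i : Fin n} (h0 : rank bs i = 0) {B : ℝ} (hB : 0 ≤ B)
    (hBj : ∀ j, 0 < bs j → j ≠ i → bs j ≤ B) : pay bs i ≤ B := by
  have hcard : (univ.filter fun j => 0 < bs j ∧ rank bs j = rank bs i + 1).card ≤ 1 := by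
    refine Finset.card_le_one.2 fun a ha b hb => ?_
    simp only [mem_filter, mem_univ, true_and] at ha hb
    exact rank_injOn ha.1 hb.1 (ha.2.trans hb.2.symm)
  have hle : ∀ j ∈ univ.filter fun j => 0 < bs j ∧ rank bs j = rank bs i + 1, bs j ≤ B := by
    intro j hj
    simp only [mem_filter, mem_univ, true_and] at hj
    refine hBj j hj.1 fun he => ?_
    rw [he] at hj
    omega
  calc pay bs i ≤ (univ.filter fun j => 0 < bs j ∧ rank bs j = rank bs i + 1).card • B :=
        Finset.sum_le_card_nsmul _ _ _ hle
    _ ≤ B := by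
        rcases Nat.le_one_iff_eq_zero_or_eq_one.1 hcard with h | h <;> rw [h] <;> simp [hB]

private lemma pay_le_self {bs : Fin n → ℝ} {i : Fin n} (hi : 0 < bs i) (h0 : rank bs i = 0) :
    pay bs i ≤ bs i := by
  refine pay_le h0 hi.le fun j hj hne => ?_
  rcases rank_zero_rel h0 hj hne with h | h
  · exact h.le
  · exact le_of_eq h.1.symm

private lemma exists_winner {bs : Fin n → ℝ} {j₀ : Fin n} (hj₀ : 0 < bs j₀) :
    ∃ jw, 0 < bs jw ∧ rank bs jw = 0 ∧ ∀ k, 0 < bs k → bs k ≤ bs jw := by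
  classical
  set T := univ.filter fun j => 0 < bs j with hT
  have hTne : T.Nonempty := ⟨j₀, by simp [hT, hj₀]⟩
  have himg : (T.image bs).Nonempty := hTne.image bs
  set MB := (T.image bs).max' himg with hMB
  have hmax : ∀ k, 0 < bs k → bs k ≤ MB := fun k hk =>
    Finset.le_max' _ _ (Finset.mem_image.2 ⟨k, by simp [hT, hk], rfl⟩)
  obtain ⟨j₁, hj₁T, hj₁⟩ := Finset.mem_image.1 ((T.image bs).max'_mem himg)
  set C := T.filter fun j => bs j = MB with hC
  have hCne : C.Nonempty := ⟨j₁, Finset.mem_filter.2 ⟨hj₁T, hj₁⟩⟩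
  set jw := C.min' hCne with hjw
  have hjwC : jw ∈ C := C.min'_mem hCne
  have hjwpos : 0 < bs jw := (Finset.mem_filter.1 (Finset.mem_filter.1 hjwC).1).2
  have hjwMB : bs jw = MB := (Finset.mem_filter.1 hjwC).2
  refine ⟨jw, hjwpos, ?_, fun k hk => hjwMB ▸ hmax k hk⟩
  rw [rank_filter, Finset.card_eq_zero, Finset.eq_empty_iff_forall_notMem]
  intro k hk
  simp only [mem_filter, mem_univ, true_and] at hk
  rcases hk.2 with h | h
  · rw [hjwMB] at h
    exact absurd (hmax k hk.1) (not_le.2 h)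
  · have hkC : k ∈ C :=
      Finset.mem_filter.2 ⟨Finset.mem_filter.2 ⟨mem_univ _, hk.1⟩, by rw [h.1, hjwMB]⟩
    exact absurd (C.min'_le k hkC) (not_le.2 h.2)

private lemma pay_ge {bs : Fin n → ℝ} {i : Fin n} (hi : 0 < bs i) (h0 : rank bs i = 0)
    {j₀ : Fin n} (hj₀i : j₀ ≠ i) (hj₀ : 0 < bs j₀)
    (hm : ∀ k, k ≠ i → 0 < bs k → bs k ≤ bs j₀) : bs j₀ ≤ pay bs i := by
  classical
  set C := univ.filter fun j => j ≠ i ∧ 0 < bs j ∧ bs j = bs j₀ with hC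
  have hCne : C.Nonempty := ⟨j₀, by simp [hC, hj₀i, hj₀]⟩
  set js := C.min' hCne with hjs
  have hjsC := Finset.mem_filter.1 (C.min'_mem hCne)
  have hjsi : js ≠ i := hjsC.2.1
  have hjspos : 0 < bs js := hjsC.2.2.1
  have hjsval : bs js = bs j₀ := hjsC.2.2.2
  have hrank : rank bs js = 1 := by
    rw [rank_filter]
    have hset : (univ.filter fun k => 0 < bs k ∧ rel bs k js) = {i} := by
      apply Finset.eq_singleton_iff_unique_mem.2
      constructor
      · simp only [mem_filter, mem_univ, true_and]
        exact ⟨hi, rank_zero_rel h0 hjspos hjsi⟩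
      · intro k hk
        simp only [mem_filter, mem_univ, true_and] at hk
        by_contra hki
        rcases hk.2 with h | h
        · rw [hjsval] at h
          exact absurd (hm k hki hk.1) (not_le.2 h)
        · have hkC : k ∈ C := Finset.mem_filter.2 ⟨mem_univ _, hki, hk.1, h.1.trans hjsval⟩
          exact absurd (C.min'_le k hkC) (not_le.2 h.2)
    rw [hset, Finset.card_singleton]
  have hjsmem : js ∈ univ.filter fun j => 0 < bs j ∧ rank bs j = rank bs i + 1 := by
    simp only [mem_filter, mem_univ, true_and]
    exact ⟨hjspos, by rw [hrank, h0]⟩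
  calc bs j₀ = bs js := hjsval.symm
    _ ≤ pay bs i :=
      Finset.single_le_sum (fun j hj => ((Finset.mem_filter.1 hj).2.1).le) hjsmem

private lemma slotW_nonneg {w : ℕ → ℝ} (hw0 : ∀ k, 0 ≤ w k) (bs : Fin n → ℝ) (i : Fin n) :
    0 ≤ slotW w bs i := by
  unfold slotW
  split
  · exact hw0 _
  · exact le_refl 0

private lemma slotW_win {w : ℕ → ℝ} {bs : Fin n → ℝ} {i : Fin n}
    (hi : 0 < bs i) (h0 : rank bs i = 0) : slotW w bs i = w 0 := by
  simp only [slotW, if_pos hi, h0]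

private lemma slotW_lose {w : ℕ → ℝ} (hwk : ∀ k, 1 ≤ k → w k = 0) {bs : Fin n → ℝ} {i : Fin n}
    (h : ¬(0 < bs i ∧ rank bs i = 0)) : slotW w bs i = 0 := by
  by_cases hb : 0 < bs i
  · simp only [slotW, if_pos hb]
    exact hwk _ (Nat.one_le_iff_ne_zero.2 fun h0 => h ⟨hb, h0⟩)
  · simp only [slotW, if_neg hb]

private lemma rankAll_filter (x : Fin n → ℝ) (i : Fin n) :
    rankAll x i = (univ.filter fun j => rel x j i).card := by
  unfold rankAll
  congr 1
  exact Finset.filter_congr fun x _ => Iff.rfl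

private lemma rankAll_lt {x : Fin n → ℝ} {j k : Fin n} (h : rel x j k) :
    rankAll x j < rankAll x k := by
  rw [rankAll_filter, rankAll_filter]
  have hsub : (univ.filter fun y => rel x y j) ⊆ univ.filter fun y => rel x y k := by
    intro y hy
    simp only [mem_filter, mem_univ, true_and] at hy ⊢
    exact rel_trans hy h
  refine Finset.card_lt_card ((Finset.ssubset_iff_of_subset hsub).2 ⟨j, ?_, ?_⟩)
  · simp only [mem_filter, mem_univ, true_and]; exact h
  · simp only [mem_filter, mem_univ, true_and]; exact rel_irrefl x j

private lemma exists_top (x : Fin n → ℝ) (hn : 0 < n) :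
    ∃ t, rankAll x t = 0 ∧ ∀ j, x j ≤ x t := by
  classical
  haveI : Nonempty (Fin n) := ⟨⟨0, hn⟩⟩
  obtain ⟨t₀, -, ht₀⟩ := Finset.exists_max_image (univ : Finset (Fin n)) x univ_nonempty
  set C := univ.filter fun j => x j = x t₀ with hC
  have hCne : C.Nonempty := ⟨t₀, Finset.mem_filter.2 ⟨mem_univ _, rfl⟩⟩
  set tt := C.min' hCne with htt
  have httC := Finset.mem_filter.1 (C.min'_mem hCne)
  have httv : x tt = x t₀ := httC.2
  refine ⟨tt, ?_, fun j => httv ▸ ht₀ j (mem_univ j)⟩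
  rw [rankAll_filter, Finset.card_eq_zero, Finset.eq_empty_iff_forall_notMem]
  intro k hk
  simp only [mem_filter, mem_univ, true_and] at hk
  rcases hk with h | h
  · rw [httv] at h
    exact absurd (ht₀ k (mem_univ k)) (not_le.2 h)
  · have hkC : k ∈ C := Finset.mem_filter.2 ⟨mem_univ _, h.1.trans httv⟩
    exact absurd (C.min'_le k hkC) (not_le.2 h.2)

private lemma dev_term_bound {w : ℕ → ℝ} (hw0 : ∀ k, 0 ≤ w k) (hw1 : 0 < w 0)
    (hwk : ∀ k, 1 ≤ k → w k = 0) {bs : Fin n → ℝ} {i : Fin n} {m V B : ℝ}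
    (hm : 0 ≤ m) (hV : 0 ≤ V) (hB : 0 ≤ B) (hbi : bs i = V)
    (hBj : ∀ j, j ≠ i → bs j ≤ B) :
    w 0 * (m * V - m * B) ≤ slotW w bs i * (m * V - m * pay bs i) ∧
    0 ≤ slotW w bs i * (m * V - m * pay bs i) := by
  by_cases hpos : 0 < bs i
  · by_cases h0 : rank bs i = 0
    · rw [slotW_win hpos h0]
      have hple : pay bs i ≤ B := pay_le h0 hB fun j hj hne => hBj j hne
      have hps : pay bs i ≤ V := hbi ▸ pay_le_self hpos h0
      constructor
      · have h1 : m * pay bs i ≤ m * B := mul_le_mul_of_nonneg_left hple hm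
        exact mul_le_mul_of_nonneg_left (by linarith) hw1.le
      · have h1 : m * pay bs i ≤ m * V := mul_le_mul_of_nonneg_left hps hm
        exact mul_nonneg hw1.le (by linarith)
    · rw [slotW_lose hwk fun hc => h0 hc.2]
      have hVB : V ≤ B := by
        have hcard : (univ.filter fun j => 0 < bs j ∧ rel bs j i).card ≠ 0 := by
          rw [← rank_filter]; exact h0
        obtain ⟨j, hj⟩ := Finset.card_pos.1 (Nat.pos_of_ne_zero hcard)
        simp only [mem_filter, mem_univ, true_and] at hj
        have hji : j ≠ i := fun he => rel_irrefl bs i (he ▸ hj.2)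
        have hbsji : bs i ≤ bs j := by
          rcases hj.2 with h | h
          · exact h.le
          · exact le_of_eq h.1.symm
        calc V = bs i := hbi.symm
          _ ≤ bs j := hbsji
          _ ≤ B := hBj j hji
      constructor
      · rw [zero_mul]
        have h1 : m * V ≤ m * B := mul_le_mul_of_nonneg_left hVB hm
        nlinarith
      · rw [zero_mul]
  · have hV0 : V = 0 := le_antisymm (hbi ▸ not_lt.1 hpos) hV
    have hsl : slotW w bs i = 0 := by simp only [slotW, if_neg hpos]
    rw [hsl, zero_mul]
    constructor
    · have h1 : 0 ≤ m * B := mul_nonneg hm hB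
      rw [hV0]
      nlinarith
    · exact le_refl 0

private lemma take_top {α : Type*} [DecidableEq α] (g : α → ℝ) (hg : ∀ x, 0 ≤ g x) :
    ∀ (d : ℕ) (F : Finset α) (κ : ℕ), F.card = κ + d →
      ∃ A ⊆ F, A.card = κ ∧ (κ : ℝ) * ∑ s ∈ F, g s ≤ (F.card : ℝ) * ∑ s ∈ A, g s := by
  intro d
  induction d with
  | zero =>
    intro F κ h
    refine ⟨F, Finset.Subset.refl F, by omega, le_of_eq ?_⟩
    rw [h, Nat.add_zero]
  | succ d ih =>
    intro F κ h
    have hFne : F.Nonempty := Finset.card_pos.1 (by omega)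
    obtain ⟨a, haF, hamin⟩ := Finset.exists_min_image F g hFne
    have hcard' : (F.erase a).card = κ + d := by
      rw [Finset.card_erase_of_mem haF]; omega
    obtain ⟨A, hAsub, hAcard, hAsum⟩ := ih (F.erase a) κ hcard'
    refine ⟨A, hAsub.trans (Finset.erase_subset a F), hAcard, ?_⟩
    have hsplit : ∑ s ∈ F, g s = g a + ∑ s ∈ F.erase a, g s := (Finset.add_sum_erase F g haF).symm
    have hga : (κ : ℝ) * g a ≤ ∑ s ∈ A, g s := by
      have hmem : ∀ x ∈ A, g a ≤ g x := fun x hx =>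
        hamin x (Finset.mem_of_mem_erase (hAsub hx))
      have h2 := Finset.card_nsmul_le_sum A g (g a) hmem
      rw [nsmul_eq_mul, hAcard] at h2
      exact h2
    have hsA : 0 ≤ ∑ s ∈ A, g s := Finset.sum_nonneg fun x _ => hg x
    rw [hcard'] at hAsum
    rw [hsplit, h]
    push_cast at hAsum ⊢
    nlinarith

private lemma select {α : Type*} [Fintype α] [DecidableEq α] (g : α → ℝ) (hg : ∀ x, 0 ≤ g x)
    {β : ℝ} {κ : ℕ} (hβ : 0 < β) (hβ1 : β ≤ 1)
    (hsupp : β * ((univ.filter fun s => 0 < g s).card : ℝ) ≤ (κ : ℝ)) :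
    ∃ A : Finset α, A.card ≤ κ ∧ β * ∑ s, g s ≤ ∑ s ∈ A, g s := by
  classical
  set F := univ.filter fun s => 0 < g s with hF
  have hsum : ∑ s, g s = ∑ s ∈ F, g s :=
    (Finset.sum_filter_of_ne fun x _ hx => (hg x).lt_of_ne (Ne.symm hx)).symm
  have h0 : 0 ≤ ∑ s ∈ F, g s := Finset.sum_nonneg fun x _ => hg x
  by_cases hcase : F.card ≤ κ
  · refine ⟨F, hcase, ?_⟩
    rw [hsum]
    nlinarith
  · push_neg at hcase
    obtain ⟨A, hAsub, hAcard, hAsum⟩ := take_top g hg (F.card - κ) F κ (by omega)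
    refine ⟨A, le_of_eq hAcard, ?_⟩
    rw [hsum]
    have hc0 : (0:ℝ) < (F.card : ℝ) := Nat.cast_pos.2 (by omega)
    have h1 : β * (F.card : ℝ) * (∑ s ∈ F, g s) ≤ (κ : ℝ) * ∑ s ∈ F, g s :=
      mul_le_mul_of_nonneg_right hsupp h0
    have h3 : (F.card : ℝ) * (β * ∑ s ∈ F, g s) ≤ (F.card : ℝ) * ∑ s ∈ A, g s := by
      nlinarith
    exact le_of_mul_le_mul_left h3 hc0

private lemma sum_PpiV {Q S : Type*} [Fintype Q] [Fintype S] (P : Q → ℝ) (pi : Q → S → ℝ)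
    (hP0 : ∀ q, 0 ≤ P q) (hpi0 : ∀ q s, 0 ≤ pi q s) (vi : Q → ℝ) (s : S) :
    ∑ q, P q * (pi q s * vi q) = mass P pi s * kwVal P pi vi s := by
  classical
  by_cases h : mass P pi s = 0
  · have hz : ∀ q ∈ (univ : Finset Q), pi q s * P q = 0 :=
      (Finset.sum_eq_zero_iff_of_nonneg fun q _ => mul_nonneg (hpi0 q s) (hP0 q)).1 h
    rw [h, zero_mul]
    refine Finset.sum_eq_zero fun q _ => ?_
    have hq := hz q (mem_univ q)
    calc P q * (pi q s * vi q) = (pi q s * P q) * vi q := by ring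
      _ = 0 := by rw [hq, zero_mul]
  · have hden : mass P pi s = ∑ q, pi q s * P q := rfl
    have hkw : kwVal P pi vi s = (∑ q, pi q s * vi q * P q) / (∑ q, pi q s * P q) := rfl
    rw [hkw, ← hden, mul_comm, div_mul_cancel₀ _ h]
    exact Finset.sum_congr rfl fun q _ => by ring

private lemma util_eq {Q S : Type*} [Fintype Q] [Fintype S] {n : ℕ} (P : Q → ℝ)
    (pi : Q → S → ℝ) (w : ℕ → ℝ) (hP0 : ∀ q, 0 ≤ P q) (hpi0 : ∀ q s, 0 ≤ pi q s)
    (v : Fin n → Q → ℝ) (b : Fin n → S → ℝ) (i : Fin n) :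
    util P pi w v b i = ∑ s, slotW w (fun j => b j s) i *
      (mass P pi s * kwVal P pi (v i) s - mass P pi s * pay (fun j => b j s) i) := by
  classical
  have step1 : util P pi w v b i = ∑ s, ∑ q, P q * (pi q s *
      (slotW w (fun j => b j s) i * (v i q - pay (fun j => b j s) i))) := by
    unfold util
    simp_rw [Finset.mul_sum]
    rw [Finset.sum_comm]
  rw [step1]
  refine Finset.sum_congr rfl fun s _ => ?_
  have hsplit : ∀ q, P q * (pi q s *
      (slotW w (fun j => b j s) i * (v i q - pay (fun j => b j s) i)))
      = slotW w (fun j => b j s) i * (P q * (pi q s * v i q))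
        - (slotW w (fun j => b j s) i * pay (fun j => b j s) i) * (pi q s * P q) := fun q => by
    ring
  rw [Finset.sum_congr rfl fun q _ => hsplit q, Finset.sum_sub_distrib,
    ← Finset.mul_sum, ← Finset.mul_sum, sum_PpiV P pi hP0 hpi0 (v i) s]
  have hden : (∑ q, pi q s * P q) = mass P pi s := rfl
  rw [hden]
  ring

private lemma SW_eq {Q S : Type*} [Fintype Q] [Fintype S] {n : ℕ} (P : Q → ℝ)
    (pi : Q → S → ℝ) (w : ℕ → ℝ) (hP0 : ∀ q, 0 ≤ P q) (hpi0 : ∀ q s, 0 ≤ pi q s)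
    (v : Fin n → Q → ℝ) (b : Fin n → S → ℝ) :
    SW P pi w v b = ∑ s, ∑ i, slotW w (fun j => b j s) i *
      (mass P pi s * kwVal P pi (v i) s) := by
  classical
  have step1 : SW P pi w v b = ∑ s, ∑ q, ∑ i, P q * (pi q s *
      (slotW w (fun j => b j s) i * v i q)) := by
    unfold SW
    simp_rw [Finset.mul_sum]
    rw [Finset.sum_comm]
  rw [step1]
  refine Finset.sum_congr rfl fun s _ => ?_
  rw [Finset.sum_comm]
  refine Finset.sum_congr rfl fun i _ => ?_
  rw [← sum_PpiV P pi hP0 hpi0 (v i) s, Finset.mul_sum]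
  exact Finset.sum_congr rfl fun q _ => by ring

end Aux


open PBM in
/-- full-information single-slot pure PoA of PBM-GSP: if the
auction system is `β`-KL-expressive and `c`-homogeneous and there is a single
slot, then for every conservative pure Nash equilibrium `b`,
`SW(OPT(v)) ≤ (c/β)·SW(b)`. -/
theorem stmt9
    {Q S : Type*} [Fintype Q] [Fintype S] {n : ℕ}
    (P : Q → ℝ) (pi : Q → S → ℝ) (w : ℕ → ℝ) (κ : ℕ)
    (hP0 : ∀ q, 0 ≤ P q) (hP1 : ∑ q, P q = 1)
    (hpi0 : ∀ q s, 0 ≤ pi q s) (hpi1 : ∀ q, ∑ s, pi q s = 1)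
    (hS : ∀ s : S, ∃ q, 0 < pi q s)
    (hw0 : ∀ k, 0 ≤ w k) (hκ : 0 < κ)
    (hw1 : 0 < w 0) (hwk : ∀ k, 1 ≤ k → w k = 0)
    (β c : ℝ) (hβ : 0 < β) (hβ1 : β ≤ 1) (hc : 0 < c)
    (v : Fin n → Q → ℝ) (hv0 : ∀ i q, 0 ≤ v i q)
    (hKL : KLExpressive pi v κ β)
    (hhom : ∀ (i : Fin n) (s : S) (q₁ q₂ : Q), 0 < pi q₁ s → 0 < pi q₂ s →
      v i q₁ ≤ c * v i q₂)
    (b : Fin n → S → ℝ)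
    (hvalid : ∀ i, ValidBid κ (b i))
    (hcons : Conservative P pi v b)
    (hNE : ∀ (i : Fin n) (b' : S → ℝ), ValidBid κ b' →
      util P pi w v (Function.update b i b') i ≤ util P pi w v b i) :
    SWopt P w v ≤ (c / β) * SW P pi w v b := by
  classical
  rcases Nat.eq_zero_or_pos n with hn | hn
  · subst hn
    simp [SWopt, SW]
  haveI : Nonempty (Fin n) := ⟨⟨0, hn⟩⟩
  -- basic nonnegativity
  have hm0 : ∀ s, 0 ≤ mass P pi s :=
    fun s => Finset.sum_nonneg fun q _ => mul_nonneg (hpi0 q s) (hP0 q)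
  have hv0k : ∀ (i : Fin n) (s : S), 0 ≤ kwVal P pi (v i) s := fun i s =>
    div_nonneg
      (Finset.sum_nonneg fun q _ =>
        mul_nonneg (mul_nonneg (hpi0 q s) (hv0 i q)) (hP0 q))
      (Finset.sum_nonneg fun q _ => mul_nonneg (hpi0 q s) (hP0 q))
  -- highest competing bid
  have hBne : ∀ (i : Fin n) (s : S),
      (insert (0:ℝ) ((Finset.univ.erase i).image fun j => b j s)).Nonempty :=
    fun i s => Finset.insert_nonempty _ _
  set B : Fin n → S → ℝ := fun i s =>
    (insert (0:ℝ) ((Finset.univ.erase i).image fun j => b j s)).max' (hBne i s) with hBdef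
  have hB0 : ∀ i s, 0 ≤ B i s := fun i s => by
    simp only [hBdef]
    exact Finset.le_max' (insert (0:ℝ) ((Finset.univ.erase i).image fun j => b j s)) 0
      (Finset.mem_insert_self _ _)
  have hBj : ∀ (i j : Fin n) (s : S), j ≠ i → b j s ≤ B i s := fun i j s hne => by
    simp only [hBdef]
    exact Finset.le_max' (insert (0:ℝ) ((Finset.univ.erase i).image fun j => b j s)) (b j s)
      (Finset.mem_insert_of_mem
        (Finset.mem_image.2 ⟨j, Finset.mem_erase.2 ⟨hne, Finset.mem_univ j⟩, rfl⟩))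
  have hBmem : ∀ i s, B i s = 0 ∨ ∃ j, j ≠ i ∧ b j s = B i s := fun i s => by
    simp only [hBdef]
    have hm := Finset.max'_mem (insert (0:ℝ) ((Finset.univ.erase i).image fun j => b j s)) (hBne i s)
    rcases Finset.mem_insert.1 hm with h | h
    · exact Or.inl h
    · obtain ⟨j, hj, hjv⟩ := Finset.mem_image.1 h
      exact Or.inr ⟨j, (Finset.mem_erase.1 hj).1, hjv⟩
  -- profit potential
  set hf : Fin n → S → ℝ := fun i s =>
    mass P pi s * max 0 (kwVal P pi (v i) s - B i s) with hfdef
  have hf0 : ∀ i s, 0 ≤ hf i s := fun i s =>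
    mul_nonneg (hm0 s) (le_max_left _ _)
  -- winning keywords
  set Win : Fin n → Finset S := fun i =>
    Finset.univ.filter fun s => 0 < b i s ∧ rank (fun j => b j s) i = 0 with hWindef
  -- (II) equilibrium utility dominates the β-fraction of total potential
  have hdev : ∀ i, w 0 * (β * ∑ s, hf i s) ≤ util P pi w v b i := by
    intro i
    have hsupp : β * ((Finset.univ.filter fun s => 0 < hf i s).card : ℝ) ≤ (κ : ℝ) := by
      refine le_trans ?_ (hKL i)
      have hsub : (Finset.univ.filter fun s => 0 < hf i s) ⊆
          Finset.univ.filter fun s : S => ∃ q, 0 < pi q s ∧ 0 < v i q := by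
        intro s hs
        simp only [Finset.mem_filter, Finset.mem_univ, true_and] at hs ⊢
        have hVpos : 0 < kwVal P pi (v i) s := by
          by_contra hle
          push_neg at hle
          have hz : hf i s = 0 := by
            simp only [hfdef]
            rw [max_eq_left (by linarith [hB0 i s])]
            ring
          rw [hz] at hs
          exact lt_irrefl 0 hs
        have hnum : 0 < ∑ q, pi q s * v i q * P q := by
          by_contra hle
          push_neg at hle
          have hden : 0 ≤ ∑ q, pi q s * P q :=
            Finset.sum_nonneg fun q _ => mul_nonneg (hpi0 q s) (hP0 q)
          have : kwVal P pi (v i) s ≤ 0 := div_nonpos_iff.2 (Or.inr ⟨hle, hden⟩)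
          linarith
        have hex : ∃ q ∈ (Finset.univ : Finset Q), (0:ℝ) < pi q s * v i q * P q := by
          by_contra hq
          push_neg at hq
          have : ∑ q, pi q s * v i q * P q ≤ 0 :=
            Finset.sum_nonpos fun q _ => hq q (Finset.mem_univ q)
          linarith
        obtain ⟨q, -, hq⟩ := hex
        have hpq : 0 < pi q s :=
          lt_of_le_of_ne (hpi0 q s) fun h => by rw [← h] at hq; simp at hq
        have hvq : 0 < v i q :=
          lt_of_le_of_ne (hv0 i q) fun h => by rw [← h] at hq; simp at hq
        exact ⟨q, hpq, hvq⟩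
      have hcard := Finset.card_le_card hsub
      exact mul_le_mul_of_nonneg_left (Nat.cast_le.2 hcard) hβ.le
    obtain ⟨A, hAcard, hAsum⟩ := select (hf i) (hf0 i) hβ hβ1 hsupp
    set b' : S → ℝ := fun s => if s ∈ A then kwVal P pi (v i) s else 0 with hb'def
    have hvalid' : ValidBid κ b' := by
      constructor
      · intro s
        simp only [hb'def]
        split
        · exact hv0k i s
        · exact le_refl 0
      · refine le_trans (Finset.card_le_card ?_) hAcard
        intro s hs
        simp only [Finset.mem_filter, Finset.mem_univ, true_and, hb'def] at hs
        by_contra hsA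
        rw [if_neg hsA] at hs
        exact lt_irrefl 0 hs
    have hNEi := hNE i b' hvalid'
    have hterm : ∀ s, (if s ∈ A then w 0 * hf i s else 0) ≤
        slotW w (fun j => Function.update b i b' j s) i *
          (mass P pi s * kwVal P pi (v i) s -
            mass P pi s * pay (fun j => Function.update b i b' j s) i) := by
      intro s
      by_cases hsA : s ∈ A
      · rw [if_pos hsA]
        have hbi' : (fun j => Function.update b i b' j s) i = kwVal P pi (v i) s := by
          simp only [Function.update_self, hb'def, if_pos hsA]
        have hBj' : ∀ j, j ≠ i → (fun j => Function.update b i b' j s) j ≤ B i s := by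
          intro j hj
          simp only [Function.update_of_ne hj]
          exact hBj i j s hj
        obtain ⟨h1, h2⟩ := dev_term_bound hw0 hw1 hwk (hm0 s) (hv0k i s) (hB0 i s) hbi' hBj'
        rcases le_total (kwVal P pi (v i) s) (B i s) with hcase | hcase
        · have hz : hf i s = 0 := by
            simp only [hfdef]
            rw [max_eq_left (by linarith)]
            ring
          rw [hz, mul_zero]
          exact h2
        · have he : hf i s = mass P pi s * (kwVal P pi (v i) s - B i s) := by
            simp only [hfdef]
            rw [max_eq_right (by linarith)]
          rw [he]
          calc w 0 * (mass P pi s * (kwVal P pi (v i) s - B i s))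
              = w 0 * (mass P pi s * kwVal P pi (v i) s - mass P pi s * B i s) := by ring
            _ ≤ _ := h1
      · rw [if_neg hsA]
        have hbz : ¬ 0 < (fun j => Function.update b i b' j s) i := by
          simp only [Function.update_self, hb'def, if_neg hsA]
          exact lt_irrefl 0
        have hsl : slotW w (fun j => Function.update b i b' j s) i = 0 := by
          simp only [slotW, if_neg hbz]
        rw [hsl, zero_mul]
    calc w 0 * (β * ∑ s, hf i s) ≤ w 0 * ∑ s ∈ A, hf i s :=
          mul_le_mul_of_nonneg_left hAsum (hw0 0)
      _ = ∑ s, (if s ∈ A then w 0 * hf i s else 0) := by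
          rw [Finset.sum_ite_mem, Finset.univ_inter, Finset.mul_sum]
      _ ≤ ∑ s, slotW w (fun j => Function.update b i b' j s) i *
            (mass P pi s * kwVal P pi (v i) s -
              mass P pi s * pay (fun j => Function.update b i b' j s) i) :=
          Finset.sum_le_sum fun s _ => hterm s
      _ = util P pi w v (Function.update b i b') i :=
          (util_eq P pi w hP0 hpi0 v (Function.update b i b') i).symm
      _ ≤ util P pi w v b i := hNEi
  -- (III) utility upper bound
  have hupper : ∀ i, util P pi w v b i ≤ w 0 * ∑ s ∈ Win i, hf i s := by
    intro i
    rw [util_eq P pi w hP0 hpi0 v b i]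
    calc ∑ s, slotW w (fun j => b j s) i *
          (mass P pi s * kwVal P pi (v i) s - mass P pi s * pay (fun j => b j s) i)
        ≤ ∑ s, (if s ∈ Win i then w 0 * hf i s else 0) := by
          refine Finset.sum_le_sum fun s _ => ?_
          by_cases hsw : s ∈ Win i
          · rw [if_pos hsw]
            simp only [hWindef, Finset.mem_filter, Finset.mem_univ, true_and] at hsw
            obtain ⟨hpos, h0⟩ := hsw
            rw [slotW_win hpos h0]
            have hpge : B i s ≤ pay (fun j => b j s) i := by
              by_cases hBz : B i s = 0
              · rw [hBz]; exact pay_nonneg _ _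
              · rcases hBmem i s with h | ⟨j₀, hj₀i, hj₀v⟩
                · exact absurd h hBz
                · have hj₀pos : 0 < b j₀ s := by
                    rw [hj₀v]
                    exact (hB0 i s).lt_of_ne (Ne.symm hBz)
                  rw [← hj₀v]
                  exact pay_ge hpos h0 hj₀i hj₀pos fun k hk _ => (hBj i k s hk).trans hj₀v.ge
            have hMp : mass P pi s * B i s ≤ mass P pi s * pay (fun j => b j s) i :=
              mul_le_mul_of_nonneg_left hpge (hm0 s)
            have h3 : mass P pi s * (kwVal P pi (v i) s - B i s) ≤ hf i s := by
              simp only [hfdef]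
              exact mul_le_mul_of_nonneg_left (le_max_right _ _) (hm0 s)
            have h4 : mass P pi s * (kwVal P pi (v i) s - B i s)
                = mass P pi s * kwVal P pi (v i) s - mass P pi s * B i s := by ring
            refine mul_le_mul_of_nonneg_left ?_ (hw0 0)
            linarith
          · rw [if_neg hsw]
            have hsl : slotW w (fun j => b j s) i = 0 := by
              refine slotW_lose hwk fun hc => hsw ?_
              simp only [hWindef, Finset.mem_filter, Finset.mem_univ, true_and]
              exact hc
            rw [hsl, zero_mul]
      _ = w 0 * ∑ s ∈ Win i, hf i s := by
          rw [Finset.sum_ite_mem, Finset.univ_inter, Finset.mul_sum]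
  -- (IV) losing potential bounded via equilibrium
  have hlose : ∀ i, β * ∑ s ∈ Finset.univ \ Win i, hf i s ≤
      (1 - β) * ∑ s ∈ Win i, hf i s := by
    intro i
    have h1 := (hdev i).trans (hupper i)
    have h2 : β * ∑ s, hf i s ≤ ∑ s ∈ Win i, hf i s := le_of_mul_le_mul_left h1 hw1
    have h3 : ∑ s ∈ Finset.univ \ Win i, hf i s + ∑ s ∈ Win i, hf i s = ∑ s, hf i s :=
      Finset.sum_sdiff (Finset.subset_univ _)
    rw [← h3] at h2
    nlinarith
  -- (V) winning potential bounded by welfare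
  have hwinSW : ∑ i, w 0 * ∑ s ∈ Win i, hf i s ≤ SW P pi w v b := by
    rw [SW_eq P pi w hP0 hpi0 v b, Finset.sum_comm]
    refine Finset.sum_le_sum fun i _ => ?_
    rw [Finset.mul_sum]
    calc ∑ s ∈ Win i, w 0 * hf i s
        ≤ ∑ s ∈ Win i, slotW w (fun j => b j s) i *
            (mass P pi s * kwVal P pi (v i) s) := by
          refine Finset.sum_le_sum fun s hs => ?_
          simp only [hWindef, Finset.mem_filter, Finset.mem_univ, true_and] at hs
          obtain ⟨hpos, h0⟩ := hs
          rw [slotW_win hpos h0]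
          refine mul_le_mul_of_nonneg_left ?_ (hw0 0)
          simp only [hfdef]
          exact mul_le_mul_of_nonneg_left
            (max_le (hv0k i s) (sub_le_self _ (hB0 i s))) (hm0 s)
      _ ≤ ∑ s, slotW w (fun j => b j s) i * (mass P pi s * kwVal P pi (v i) s) :=
          Finset.sum_le_sum_of_subset_of_nonneg (Finset.subset_univ _) fun s _ _ =>
            mul_nonneg (slotW_nonneg hw0 _ _) (mul_nonneg (hm0 s) (hv0k i s))
  -- query-winners and keyword-winners
  have htex : ∀ q : Q, ∃ tq : Fin n, rankAll (fun j => v j q) tq = 0 ∧ ∀ j, v j q ≤ v tq q :=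
    fun q => exists_top (fun j => v j q) hn
  choose t ht0 htmax using htex
  have hσex : ∀ s : S, ∃ i : Fin n, ∀ j, kwVal P pi (v j) s ≤ kwVal P pi (v i) s := fun s => by
    obtain ⟨i, -, hi⟩ := Finset.exists_max_image Finset.univ
      (fun j => kwVal P pi (v j) s) Finset.univ_nonempty
    exact ⟨i, fun j => hi j (Finset.mem_univ j)⟩
  choose σ hσ using hσex
  -- (VII) SWopt via per-query winners
  have hSWopt : SWopt P w v = ∑ q, P q * (w 0 * v (t q) q) := by
    unfold SWopt
    refine Finset.sum_congr rfl fun q _ => ?_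
    congr 1
    rw [Finset.sum_eq_single (t q)]
    · rw [ht0 q]
    · intro j _ hj
      have hne : rankAll (fun k => v k q) j ≠ 0 := by
        rcases rel_total (bs := fun k => v k q) hj with hr | hr
        · have := rankAll_lt hr
          rw [ht0 q] at this
          omega
        · have := rankAll_lt hr
          rw [ht0 q] at this
          omega
      rw [hwk _ (Nat.one_le_iff_ne_zero.2 hne), zero_mul]
    · intro hmem
      exact absurd (Finset.mem_univ _) hmem
  -- (VIII) homogeneity: per-query value vs keyword value
  have hhomk : ∀ (i : Fin n) (q : Q) (s : S), 0 < pi q s * P q →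
      v i q ≤ c * kwVal P pi (v i) s := by
    intro i q s hqs
    have hden : 0 < ∑ q', pi q' s * P q' :=
      lt_of_lt_of_le hqs (Finset.single_le_sum
        (fun q' _ => mul_nonneg (hpi0 q' s) (hP0 q')) (Finset.mem_univ q))
    have hpq : 0 < pi q s :=
      lt_of_le_of_ne (hpi0 q s) fun he => by rw [← he] at hqs; simp at hqs
    have hnum : (v i q / c) * (∑ q', pi q' s * P q') ≤ ∑ q', pi q' s * v i q' * P q' := by
      rw [Finset.mul_sum]
      refine Finset.sum_le_sum fun q' _ => ?_
      by_cases hpq' : 0 < pi q' s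
      · have hvv : v i q ≤ c * v i q' := hhom i s q q' hpq hpq'
        have hdiv : v i q / c ≤ v i q' := (div_le_iff₀ hc).2 (by linarith)
        calc v i q / c * (pi q' s * P q')
            ≤ v i q' * (pi q' s * P q') :=
              mul_le_mul_of_nonneg_right hdiv (mul_nonneg (hpi0 q' s) (hP0 q'))
          _ = pi q' s * v i q' * P q' := by ring
      · have hz : pi q' s = 0 := le_antisymm (not_lt.1 hpq') (hpi0 q' s)
        rw [hz]
        simp
    have hkw : v i q / c ≤ kwVal P pi (v i) s := by
      have hrfl : kwVal P pi (v i) s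
          = (∑ q', pi q' s * v i q' * P q') / (∑ q', pi q' s * P q') := rfl
      rw [hrfl, le_div_iff₀ hden]
      exact hnum
    calc v i q = c * (v i q / c) := by field_simp
      _ ≤ c * kwVal P pi (v i) s := mul_le_mul_of_nonneg_left hkw hc.le
  -- (IX) SWopt bounded by c times keyword-optimal welfare
  have hstep1 : SWopt P w v ≤ c * ∑ s, w 0 * (mass P pi s * kwVal P pi (v (σ s)) s) := by
    rw [hSWopt]
    have e1 : ∑ q, P q * (w 0 * v (t q) q)
        = ∑ s, ∑ q, w 0 * ((pi q s * P q) * v (t q) q) := by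
      rw [Finset.sum_comm]
      refine Finset.sum_congr rfl fun q _ => ?_
      have e2 : ∀ s, w 0 * ((pi q s * P q) * v (t q) q)
          = (w 0 * (P q * v (t q) q)) * pi q s := fun s => by ring
      rw [Finset.sum_congr rfl fun s _ => e2 s, ← Finset.mul_sum, hpi1 q, mul_one]
      ring
    rw [e1, Finset.mul_sum]
    refine Finset.sum_le_sum fun s _ => ?_
    calc ∑ q, w 0 * ((pi q s * P q) * v (t q) q)
        ≤ ∑ q, w 0 * ((pi q s * P q) * (c * kwVal P pi (v (σ s)) s)) := by
          refine Finset.sum_le_sum fun q _ => ?_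
          by_cases hz : 0 < pi q s * P q
          · have h1 : v (t q) q ≤ c * kwVal P pi (v (t q)) s := hhomk (t q) q s hz
            have h2 : kwVal P pi (v (t q)) s ≤ kwVal P pi (v (σ s)) s := hσ s (t q)
            have h3 : v (t q) q ≤ c * kwVal P pi (v (σ s)) s :=
              h1.trans (mul_le_mul_of_nonneg_left h2 hc.le)
            exact mul_le_mul_of_nonneg_left
              (mul_le_mul_of_nonneg_left h3
                (mul_nonneg (hpi0 q s) (hP0 q))) (hw0 0)
          · have hz0 : pi q s * P q = 0 :=
              le_antisymm (not_lt.1 hz) (mul_nonneg (hpi0 q s) (hP0 q))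
            rw [hz0]
            simp
      _ = c * (w 0 * (mass P pi s * kwVal P pi (v (σ s)) s)) := by
          have hmass : mass P pi s = ∑ q, pi q s * P q := rfl
          rw [hmass, Finset.sum_mul, Finset.mul_sum, Finset.mul_sum]
          exact Finset.sum_congr rfl fun q _ => by ring
  -- (X) competing bid covered by welfare
  have hcover : ∀ (s : S) (i : Fin n), w 0 * (mass P pi s * B i s) ≤
      ∑ j, slotW w (fun k => b k s) j * (mass P pi s * kwVal P pi (v j) s) := by
    intro s i
    have hRHS0 : (0:ℝ) ≤ ∑ j, slotW w (fun k => b k s) j *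
        (mass P pi s * kwVal P pi (v j) s) :=
      Finset.sum_nonneg fun j _ =>
        mul_nonneg (slotW_nonneg hw0 _ _) (mul_nonneg (hm0 s) (hv0k j s))
    by_cases hBz : B i s = 0
    · rw [hBz, mul_zero, mul_zero]
      exact hRHS0
    · rcases hBmem i s with h | ⟨j₀, hj₀i, hj₀v⟩
      · exact absurd h hBz
      · have hj₀pos : 0 < b j₀ s := by
          rw [hj₀v]
          exact (hB0 i s).lt_of_ne (Ne.symm hBz)
        obtain ⟨jw, hjwpos, hjwrank, hjwmax⟩ := exists_winner (bs := fun k => b k s) hj₀pos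
        have hterm : w 0 * (mass P pi s * B i s) ≤
            slotW w (fun k => b k s) jw * (mass P pi s * kwVal P pi (v jw) s) := by
          rw [slotW_win hjwpos hjwrank]
          refine mul_le_mul_of_nonneg_left ?_ (hw0 0)
          refine mul_le_mul_of_nonneg_left ?_ (hm0 s)
          calc B i s = b j₀ s := hj₀v.symm
            _ ≤ b jw s := hjwmax j₀ hj₀pos
            _ ≤ kwVal P pi (v jw) s := hcons jw s
        exact hterm.trans (Finset.single_le_sum
          (f := fun j => slotW w (fun k => b k s) j * (mass P pi s * kwVal P pi (v j) s))
          (fun j _ => mul_nonneg (slotW_nonneg hw0 _ _) (mul_nonneg (hm0 s) (hv0k j s)))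
          (Finset.mem_univ jw))
  -- (XI) per-keyword smoothness
  have hstep2 : ∀ s : S, w 0 * (mass P pi s * kwVal P pi (v (σ s)) s) ≤
      (if s ∈ Win (σ s) then 0 else w 0 * hf (σ s) s) +
      ∑ j, slotW w (fun k => b k s) j * (mass P pi s * kwVal P pi (v j) s) := by
    intro s
    by_cases hsw : s ∈ Win (σ s)
    · rw [if_pos hsw, zero_add]
      simp only [hWindef, Finset.mem_filter, Finset.mem_univ, true_and] at hsw
      obtain ⟨hpos, h0⟩ := hsw
      calc w 0 * (mass P pi s * kwVal P pi (v (σ s)) s)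
          = slotW w (fun k => b k s) (σ s) * (mass P pi s * kwVal P pi (v (σ s)) s) := by
            rw [slotW_win hpos h0]
        _ ≤ ∑ j, slotW w (fun k => b k s) j * (mass P pi s * kwVal P pi (v j) s) :=
            Finset.single_le_sum
              (f := fun j => slotW w (fun k => b k s) j * (mass P pi s * kwVal P pi (v j) s))
              (fun j _ => mul_nonneg (slotW_nonneg hw0 _ _) (mul_nonneg (hm0 s) (hv0k j s)))
              (Finset.mem_univ (σ s))
    · rw [if_neg hsw]
      have h2 : kwVal P pi (v (σ s)) s ≤
          max 0 (kwVal P pi (v (σ s)) s - B (σ s) s) + B (σ s) s := by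
        have := le_max_right (0:ℝ) (kwVal P pi (v (σ s)) s - B (σ s) s)
        linarith
      have h3 := mul_le_mul_of_nonneg_left h2 (hm0 s)
      have h1 : mass P pi s * kwVal P pi (v (σ s)) s ≤
          hf (σ s) s + mass P pi s * B (σ s) s := by
        simp only [hfdef]
        nlinarith
      have h4 := hcover s (σ s)
      have h6 := mul_le_mul_of_nonneg_left h1 (hw0 0)
      have h7 : w 0 * (hf (σ s) s + mass P pi s * B (σ s) s)
          = w 0 * hf (σ s) s + w 0 * (mass P pi s * B (σ s) s) := by ring
      linarith
  -- (XII) global smoothness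
  have hstep2sum : w 0 * ∑ s, mass P pi s * kwVal P pi (v (σ s)) s ≤
      (1 - β) / β * SW P pi w v b + SW P pi w v b := by
    have hA : ∑ s, w 0 * (mass P pi s * kwVal P pi (v (σ s)) s) ≤
        (∑ s, (if s ∈ Win (σ s) then 0 else w 0 * hf (σ s) s)) + SW P pi w v b := by
      rw [SW_eq P pi w hP0 hpi0 v b, ← Finset.sum_add_distrib]
      exact Finset.sum_le_sum fun s _ => hstep2 s
    have hB1 : ∑ s, (if s ∈ Win (σ s) then 0 else w 0 * hf (σ s) s) ≤
        ∑ i, ∑ s ∈ Finset.univ \ Win i, w 0 * hf i s := by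
      have hper : ∀ s, (if s ∈ Win (σ s) then 0 else w 0 * hf (σ s) s) ≤
          ∑ i, (if s ∈ Finset.univ \ Win i then w 0 * hf i s else 0) := by
        intro s
        have hnn : ∀ i ∈ (Finset.univ : Finset (Fin n)),
            (0:ℝ) ≤ (if s ∈ Finset.univ \ Win i then w 0 * hf i s else 0) := fun i _ => by
          split
          · exact mul_nonneg (hw0 0) (hf0 i s)
          · exact le_refl 0
        by_cases hsw : s ∈ Win (σ s)
        · rw [if_pos hsw]
          exact Finset.sum_nonneg hnn
        · rw [if_neg hsw]
          have hmem : s ∈ Finset.univ \ Win (σ s) :=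
            Finset.mem_sdiff.2 ⟨Finset.mem_univ s, hsw⟩
          have hsum := Finset.single_le_sum hnn (Finset.mem_univ (σ s))
          rw [if_pos hmem] at hsum
          exact hsum
      calc ∑ s, (if s ∈ Win (σ s) then 0 else w 0 * hf (σ s) s)
          ≤ ∑ s, ∑ i, (if s ∈ Finset.univ \ Win i then w 0 * hf i s else 0) :=
            Finset.sum_le_sum fun s _ => hper s
        _ = ∑ i, ∑ s, (if s ∈ Finset.univ \ Win i then w 0 * hf i s else 0) :=
            Finset.sum_comm
        _ = ∑ i, ∑ s ∈ Finset.univ \ Win i, w 0 * hf i s :=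
            Finset.sum_congr rfl fun i _ => by
              rw [Finset.sum_ite_mem, Finset.univ_inter]
    have hC : ∑ i, ∑ s ∈ Finset.univ \ Win i, w 0 * hf i s ≤
        (1 - β) / β * SW P pi w v b := by
      have hper : ∀ i : Fin n, ∑ s ∈ Finset.univ \ Win i, w 0 * hf i s ≤
          (1 - β) / β * (w 0 * ∑ s ∈ Win i, hf i s) := by
        intro i
        have h1 := hlose i
        have h2 : ∑ s ∈ Finset.univ \ Win i, hf i s ≤
            (1 - β) / β * ∑ s ∈ Win i, hf i s := by
          rw [div_mul_eq_mul_div, le_div_iff₀ hβ]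
          nlinarith
        calc ∑ s ∈ Finset.univ \ Win i, w 0 * hf i s
            = w 0 * ∑ s ∈ Finset.univ \ Win i, hf i s := by rw [Finset.mul_sum]
          _ ≤ w 0 * ((1 - β) / β * ∑ s ∈ Win i, hf i s) :=
              mul_le_mul_of_nonneg_left h2 (hw0 0)
          _ = (1 - β) / β * (w 0 * ∑ s ∈ Win i, hf i s) := by ring
      calc ∑ i, ∑ s ∈ Finset.univ \ Win i, w 0 * hf i s
          ≤ ∑ i, (1 - β) / β * (w 0 * ∑ s ∈ Win i, hf i s) :=
            Finset.sum_le_sum fun i _ => hper i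
        _ = (1 - β) / β * ∑ i, w 0 * ∑ s ∈ Win i, hf i s := by rw [Finset.mul_sum]
        _ ≤ (1 - β) / β * SW P pi w v b :=
            mul_le_mul_of_nonneg_left hwinSW (div_nonneg (by linarith) hβ.le)
    calc w 0 * ∑ s, mass P pi s * kwVal P pi (v (σ s)) s
        = ∑ s, w 0 * (mass P pi s * kwVal P pi (v (σ s)) s) := by rw [Finset.mul_sum]
      _ ≤ (∑ s, (if s ∈ Win (σ s) then 0 else w 0 * hf (σ s) s)) + SW P pi w v b := hA
      _ ≤ (1 - β) / β * SW P pi w v b + SW P pi w v b := by linarith [hB1.trans hC]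
  -- final assembly
  calc SWopt P w v ≤ c * ∑ s, w 0 * (mass P pi s * kwVal P pi (v (σ s)) s) := hstep1
    _ = c * (w 0 * ∑ s, mass P pi s * kwVal P pi (v (σ s)) s) := by
        simp only [Finset.mul_sum]
    _ ≤ c * ((1 - β) / β * SW P pi w v b + SW P pi w v b) :=
        mul_le_mul_of_nonneg_left hstep2sum hc.le
    _ = (c / β) * SW P pi w v b := by
        have hx : (1 - β) / β * SW P pi w v b + SW P pi w v b = SW P pi w v b / β := by
          field_simp
          ring
        rw [hx]
        ring
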